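/- Let f : {-1,1}^n → ℝ be 2-valued-like with deg(f) ≥ 2, and let F be a shifted translation of f. Then F is also 2-valued-like. -/

import Mathlib

open Finset

/-- The coefficient function `c` (of a multilinear polynomial) is that of a dictator:
a nonconstant function depending on a single coordinate. -/
def IsDictatorCoeff {n : ℕ} (c : Finset (Fin n) → ℝ) : Prop :=
  ∃ w : Fin n, c {w} ≠ 0 ∧ ∀ S : Finset (Fin n), c S ≠ 0 → S ⊆ {w}

/-- The multilinear polynomial with coefficients `c` has degree exactly 1. -/
def HasDegreeOne {n : ℕ} (c : Finset (Fin n) → ℝ) : Prop :=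
  (∀ S : Finset (Fin n), c S ≠ 0 → S.card ≤ 1) ∧ ∃ S : Finset (Fin n), c S ≠ 0 ∧ S.card = 1

/-- `c` is the coefficient function of a 2-valued-like function: its degree is 1 iff it
is a dictator, and if it is not a dictator then every relevant coordinate lies in some
support set of size at least 2. -/
def TwoValuedLike {n : ℕ} (c : Finset (Fin n) → ℝ) : Prop :=
  (HasDegreeOne c ↔ IsDictatorCoeff c) ∧
  (¬ IsDictatorCoeff c → ∀ w : Fin n, (∃ S, c S ≠ 0 ∧ w ∈ S) →
    ∃ S : Finset (Fin n), c S ≠ 0 ∧ 2 ≤ S.card ∧ w ∈ S)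

lemma multilinear_unique {n : ℕ} (e : Finset (Fin n) → ℝ)
    (h : ∀ x : Fin n → ℝ, ∑ S : Finset (Fin n), e S * ∏ i ∈ S, x i = 0) :
    ∀ S, e S = 0 := by
  intro S
  induction S using Finset.strongInduction with
  | _ S ih =>
    have hx := h (fun i => if i ∈ S then 1 else 0)
    have hprod : ∀ T : Finset (Fin n),
        (∏ i ∈ T, (if i ∈ S then (1:ℝ) else 0)) = if T ⊆ S then 1 else 0 := by
      intro T
      by_cases hT : T ⊆ S
      · rw [if_pos hT]; apply Finset.prod_eq_one; intro i hi; rw [if_pos (hT hi)]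
      · rw [if_neg hT]
        obtain ⟨i, hiT, hiS⟩ := Finset.not_subset.mp hT
        exact Finset.prod_eq_zero hiT (if_neg hiS)
    simp only [hprod, mul_ite, mul_one, mul_zero] at hx
    rw [← Finset.sum_filter] at hx
    have hsum : ∑ T ∈ univ.filter (fun T => T ⊆ S), e T = e S := by
      apply Finset.sum_eq_single_of_mem S (by simp)
      intro T hT hTS
      exact ih T (lt_of_le_of_ne (by simpa using hT) hTS)
    rw [hsum] at hx
    exact hx

lemma swap_sum {n : ℕ} (g : Finset (Fin n) → Finset (Fin n) → ℝ) :
    ∑ S : Finset (Fin n), ∑ U ∈ S.powerset, g S U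
      = ∑ U : Finset (Fin n), ∑ S ∈ univ.filter (fun S => U ⊆ S), g S U := by
  have hpow : ∀ S : Finset (Fin n), S.powerset = univ.filter (fun U => U ⊆ S) := by
    intro S; ext U; simp
  calc ∑ S : Finset (Fin n), ∑ U ∈ S.powerset, g S U
      = ∑ S : Finset (Fin n), ∑ U : Finset (Fin n), if U ⊆ S then g S U else 0 := by
        simp_rw [hpow, Finset.sum_filter]
    _ = ∑ U : Finset (Fin n), ∑ S : Finset (Fin n), if U ⊆ S then g S U else 0 :=
        Finset.sum_comm
    _ = _ := by simp_rw [Finset.sum_filter]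

lemma shift_coeff (n : ℕ) (c C : Finset (Fin n) → ℝ) (κ : Fin n → ℝ) (κ₀ : ℝ)
    (hshift : ∀ x : Fin n → ℝ,
      (∑ S : Finset (Fin n), C S * ∏ i ∈ S, x i) =
        (∑ S : Finset (Fin n), c S * ∏ i ∈ S, (x i + κ i)) + κ₀) :
    ∀ S : Finset (Fin n),
      C S = (∑ T ∈ univ.filter (fun T => S ⊆ T), c T * ∏ i ∈ T \ S, κ i)
        + (if S = ∅ then κ₀ else 0) := by
  set D : Finset (Fin n) → ℝ := fun S =>
    (∑ T ∈ univ.filter (fun T => S ⊆ T), c T * ∏ i ∈ T \ S, κ i)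
      + (if S = ∅ then κ₀ else 0) with hD
  have key : ∀ x : Fin n → ℝ,
      ∑ S : Finset (Fin n), D S * ∏ i ∈ S, x i =
        (∑ S : Finset (Fin n), c S * ∏ i ∈ S, (x i + κ i)) + κ₀ := by
    intro x
    have expand : ∑ S : Finset (Fin n), c S * ∏ i ∈ S, (x i + κ i)
        = ∑ U : Finset (Fin n),
            (∑ T ∈ univ.filter (fun T => U ⊆ T), c T * ∏ i ∈ T \ U, κ i) * ∏ i ∈ U, x i := by
      have := swap_sum (fun T U => c T * ((∏ i ∈ U, x i) * ∏ i ∈ T \ U, κ i))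
      simp_rw [Finset.prod_add, Finset.mul_sum]
      rw [this]
      congr 1; ext U
      rw [Finset.sum_mul]
      congr 1; ext T
      ring
    simp_rw [hD, add_mul, Finset.sum_add_distrib]
    rw [← expand]
    congr 1
    rw [Finset.sum_eq_single_of_mem (∅ : Finset (Fin n)) (by simp)]
    · simp
    · intro T _ hT; simp [hT]
  have hz : ∀ S, (fun S => C S - D S) S = 0 := by
    apply multilinear_unique
    intro x
    simp_rw [sub_mul, Finset.sum_sub_distrib, hshift x, key x, sub_self]
  intro S
  have := hz S
  simpa [sub_eq_zero] using this

/-- If `S₀` has maximal cardinality among support sets of `c` containing it as supersets… -/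
lemma coeff_top (n : ℕ) (c C : Finset (Fin n) → ℝ) (κ : Fin n → ℝ) (κ₀ : ℝ)
    (hC : ∀ S : Finset (Fin n),
      C S = (∑ T ∈ univ.filter (fun T => S ⊆ T), c T * ∏ i ∈ T \ S, κ i)
        + (if S = ∅ then κ₀ else 0))
    (S₀ : Finset (Fin n)) (hne : S₀ ≠ ∅)
    (hmax : ∀ T : Finset (Fin n), S₀ ⊂ T → c T = 0) :
    C S₀ = c S₀ := by
  rw [hC S₀, if_neg hne, add_zero]
  rw [Finset.sum_eq_single_of_mem S₀ (by simp)]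
  · simp
  · intro T hT hTne
    have hsub : S₀ ⊆ T := by simpa using hT
    rw [hmax T (lt_of_le_of_ne hsub (Ne.symm hTne)), zero_mul]

/-- If `f` (with coefficients `c`) is 2-valued-like of degree ≥ 2 and
`F` (with coefficients `C`) is a shifted translation of `f`, then `F` is 2-valued-like. -/
theorem stmt_12 (n : ℕ) (c C : Finset (Fin n) → ℝ) (κ : Fin n → ℝ) (κ₀ : ℝ)
    (hshift : ∀ x : Fin n → ℝ,
      (∑ S : Finset (Fin n), C S * ∏ i ∈ S, x i) =
        (∑ S : Finset (Fin n), c S * ∏ i ∈ S, (x i + κ i)) + κ₀)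
    (h2v : TwoValuedLike c)
    (hdeg : ∃ S : Finset (Fin n), c S ≠ 0 ∧ 2 ≤ S.card) :
    TwoValuedLike C := by
  have hC := shift_coeff n c C κ κ₀ hshift
  obtain ⟨Sd, hSd, hSd2⟩ := hdeg
  -- c is not of degree one, hence not a dictator
  have hnd1c : ¬ HasDegreeOne c := by
    rintro ⟨h1, -⟩
    exact absurd (h1 Sd hSd) (by omega)
  have hndc : ¬ IsDictatorCoeff c := fun h => hnd1c (h2v.1.mpr h)
  -- there is a support set of C of cardinality ≥ 2
  have hbig : ∃ S : Finset (Fin n), C S ≠ 0 ∧ 2 ≤ S.card := by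
    obtain ⟨S₀, hS₀mem, hS₀max⟩ :=
      Finset.exists_max_image (univ.filter (fun S => c S ≠ 0)) Finset.card
        ⟨Sd, by simpa using hSd⟩
    have hcS₀ : c S₀ ≠ 0 := by simpa using hS₀mem
    have hcard : 2 ≤ S₀.card := le_trans hSd2 (hS₀max Sd (by simpa using hSd))
    have hne : S₀ ≠ ∅ := by
      intro h; rw [h] at hcard; simp at hcard
    have hmax : ∀ T : Finset (Fin n), S₀ ⊂ T → c T = 0 := by
      intro T hT
      by_contra hcT
      have := hS₀max T (by simpa using hcT)
      have := Finset.card_lt_card hT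
      omega
    refine ⟨S₀, ?_, hcard⟩
    rw [coeff_top n c C κ κ₀ hC S₀ hne hmax]
    exact hcS₀
  obtain ⟨Sb, hSb, hSb2⟩ := hbig
  have hnd1C : ¬ HasDegreeOne C := by
    rintro ⟨h1, -⟩
    exact absurd (h1 Sb hSb) (by omega)
  have hndC : ¬ IsDictatorCoeff C := by
    rintro ⟨w, -, hw⟩
    have := Finset.card_le_card (hw Sb hSb)
    simp at this
    omega
  constructor
  · exact ⟨fun h => absurd h hnd1C, fun h => absurd h hndC⟩
  · intro _ w ⟨S, hCS, hwS⟩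
    by_cases h2 : 2 ≤ S.card
    · exact ⟨S, hCS, h2, hwS⟩
    · -- S = {w}
      have hScard : S.card = 1 := by
        have : 1 ≤ S.card := Finset.card_pos.mpr ⟨w, hwS⟩
        omega
      have hSw : S = {w} := by
        obtain ⟨a, ha⟩ := Finset.card_eq_one.mp hScard
        rw [ha] at hwS ⊢
        simp at hwS
        rw [hwS]
      rw [hSw] at hCS
      -- C {w} ≠ 0 ⇒ some c T ≠ 0 with w ∈ T
      have hrel : ∃ T, c T ≠ 0 ∧ w ∈ T := by
        by_contra hcon
        push_neg at hcon
        apply hCS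
        rw [hC {w}, if_neg (by simp), add_zero]
        apply Finset.sum_eq_zero
        intro T hT
        have hsub : {w} ⊆ T := by simpa using hT
        by_cases hcT : c T = 0
        · rw [hcT, zero_mul]
        · exact absurd (hcon T hcT) (by simp [hsub (Finset.mem_singleton_self w)])
      -- c is 2-valued like and not a dictator, so w has a big support set in c
      obtain ⟨T₂, hT₂, hT₂2, hwT₂⟩ := h2v.2 hndc w (by
        obtain ⟨T, hT, hwT⟩ := hrel; exact ⟨T, hT, hwT⟩)
      -- take a maximal-cardinality support set of c containing w
      obtain ⟨T₀, hT₀mem, hT₀max⟩ :=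
        Finset.exists_max_image (univ.filter (fun T => c T ≠ 0 ∧ w ∈ T)) Finset.card
          ⟨T₂, by simp [hT₂, hwT₂]⟩
      simp only [Finset.mem_filter, Finset.mem_univ, true_and] at hT₀mem
      obtain ⟨hcT₀, hwT₀⟩ := hT₀mem
      have hcard : 2 ≤ T₀.card := le_trans hT₂2 (hT₀max T₂ (by simp [hT₂, hwT₂]))
      have hne : T₀ ≠ ∅ := Finset.ne_empty_of_mem hwT₀
      have hmax : ∀ T : Finset (Fin n), T₀ ⊂ T → c T = 0 := by
        intro T hT
        by_contra hcT
        have hwT : w ∈ T := hT.1 hwT₀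
        have := hT₀max T (by simp [hcT, hwT])
        have := Finset.card_lt_card hT
        omega
      refine ⟨T₀, ?_, hcard, hwT₀⟩
      rw [coeff_top n c C κ κ₀ hC T₀ hne hmax]
      exact hcT₀
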